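/- Let μ0 be a mean-zero Gaussian measure with μ0(X) = 1 for a Banach space X, let Γ be a positive definite m×m covariance matrix, let Φ(u; y) = (1/2)|Γ^{-1/2}(y − G(u))|² and Φ^N(u; y) = (1/2)|Γ^{-1/2}(y − G^N(u))|² for maps G, G^N : X → R^m. Assume G and G^N satisfy, uniformly in N: for every ε > 0 there is M = M(ε) ∈ R with |Γ^{-1/2} G(u)| ≤ exp(ε‖u‖_X² + M) and |Γ^{-1/2} G^N(u)| ≤ exp(ε‖u‖_X² + M) for all u ∈ X. Assume also that for any ε > 0 there is K'(ε) > 0 such that |G(u) − G^N(u)| ≤ K' exp(ε‖u‖_X²) ψ(N) for all u ∈ X, with ψ(N) → 0 as N → ∞. Then the posterior measures μ and μ^N, defined by dμ/dμ0 ∝ exp(−Φ(u; y)) and dμ^N/dμ0 ∝ exp(−Φ^N(u; y)), satisfy d_Hell(μ, μ^N) ≤ C ψ(N) for a constant C independent of N. -/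

import Mathlib

/-!
STATEMENT 2 (Corollary 2.3 of the paper, `c:wp2`).

If the forward maps `G, G^N : X → ℝ^m` satisfy the exponential bound of
Assumption 2.2 uniformly in `N`, and `|G(u) − G^N(u)| ≤ K' exp(ε‖u‖²) ψ(N)`,
then the posterior measures `dμ/dμ0 ∝ exp(−½|y − G(u)|_Γ²)` and
`dμ^N/dμ0 ∝ exp(−½|y − G^N(u)|_Γ²)` satisfy `d_Hell(μ, μ^N) ≤ C ψ(N)`.
-/

open MeasureTheory Real Filter Topology

/-- Euclidean norm on `ℝ^m`. -/
noncomputable def eucNorm {m : ℕ} (v : Fin m → ℝ) : ℝ :=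
  Real.sqrt (∑ i, v i ^ 2)

/-- The covariance-weighted norm `|v|_Γ = |Γ^{-1/2} v|`, expressed through a fixed
square root `Γih` of `Γ⁻¹`. -/
noncomputable def wnorm {m : ℕ} (Γih : Matrix (Fin m) (Fin m) ℝ) (v : Fin m → ℝ) : ℝ :=
  eucNorm (Γih.mulVec v)

/-- The Hellinger distance between the measures with densities `p` and `q` with
respect to the reference measure `ν`. -/
noncomputable def hellinger {X : Type*} [MeasurableSpace X] (ν : Measure X)
    (p q : X → ℝ) : ℝ :=
  Real.sqrt ((1 / 2) * ∫ u, (Real.sqrt (p u) - Real.sqrt (q u)) ^ 2 ∂ν)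

section helpers

lemma eucNorm_nonneg {m : ℕ} (v : Fin m → ℝ) : 0 ≤ eucNorm v := Real.sqrt_nonneg _

lemma eucNorm_eq_norm {m : ℕ} (v : Fin m → ℝ) :
    eucNorm v = ‖(WithLp.equiv 2 (Fin m → ℝ)).symm v‖ := by
  rw [EuclideanSpace.norm_eq]
  simp [eucNorm, sq_abs]

lemma eucNorm_add_le {m : ℕ} (a b : Fin m → ℝ) :
    eucNorm (a + b) ≤ eucNorm a + eucNorm b := by
  simp only [eucNorm_eq_norm]
  rw [show (WithLp.equiv 2 (Fin m → ℝ)).symm (a + b)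
      = (WithLp.equiv 2 (Fin m → ℝ)).symm a + (WithLp.equiv 2 (Fin m → ℝ)).symm b from rfl]
  exact norm_add_le _ _

lemma eucNorm_neg {m : ℕ} (a : Fin m → ℝ) : eucNorm (-a) = eucNorm a := by
  simp [eucNorm]

lemma eucNorm_continuous {m : ℕ} : Continuous (eucNorm (m := m)) := by
  unfold eucNorm
  exact Real.continuous_sqrt.comp (continuous_finset_sum _ fun i _ => (continuous_apply i).pow 2)

lemma wnorm_lip {m : ℕ} (A : Matrix (Fin m) (Fin m) ℝ) (v : Fin m → ℝ) :
    wnorm A v ≤ Real.sqrt (∑ i, ∑ j, A i j ^ 2) * eucNorm v := by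
  have h1 : ∀ i, (A.mulVec v i) ^ 2 ≤ (∑ j, A i j ^ 2) * ∑ j, v j ^ 2 := by
    intro i
    have := Finset.sum_mul_sq_le_sq_mul_sq Finset.univ (fun j => A i j) v
    simpa [Matrix.mulVec, dotProduct] using this
  have h2 : ∑ i, (A.mulVec v i) ^ 2 ≤ (∑ i, ∑ j, A i j ^ 2) * ∑ j, v j ^ 2 := by
    rw [Finset.sum_mul]
    exact Finset.sum_le_sum fun i _ => h1 i
  calc wnorm A v = Real.sqrt (∑ i, (A.mulVec v i) ^ 2) := rfl
    _ ≤ Real.sqrt ((∑ i, ∑ j, A i j ^ 2) * ∑ j, v j ^ 2) := Real.sqrt_le_sqrt h2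
    _ = Real.sqrt (∑ i, ∑ j, A i j ^ 2) * eucNorm v := by
        rw [Real.sqrt_mul (by positivity)]; rfl

lemma wnorm_nonneg' {m : ℕ} (A : Matrix (Fin m) (Fin m) ℝ) (v : Fin m → ℝ) : 0 ≤ wnorm A v :=
  eucNorm_nonneg _

lemma wnorm_add_le {m : ℕ} (A : Matrix (Fin m) (Fin m) ℝ) (a b : Fin m → ℝ) :
    wnorm A (a + b) ≤ wnorm A a + wnorm A b := by
  unfold wnorm; rw [Matrix.mulVec_add]; exact eucNorm_add_le _ _

lemma wnorm_neg {m : ℕ} (A : Matrix (Fin m) (Fin m) ℝ) (a : Fin m → ℝ) :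
    wnorm A (-a) = wnorm A a := by
  unfold wnorm; rw [Matrix.mulVec_neg]; exact eucNorm_neg _

lemma wnorm_sub_wnorm {m : ℕ} (A : Matrix (Fin m) (Fin m) ℝ) (a b : Fin m → ℝ) :
    wnorm A a - wnorm A b ≤ wnorm A (a - b) := by
  have := wnorm_add_le A (a - b) b
  simpa using this

lemma wnorm_sub_le {m : ℕ} (A : Matrix (Fin m) (Fin m) ℝ) (a b : Fin m → ℝ) :
    wnorm A (a - b) ≤ wnorm A a + wnorm A b := by
  rw [sub_eq_add_neg]
  exact (wnorm_add_le A a (-b)).trans (by rw [wnorm_neg])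

lemma wnorm_continuous {m : ℕ} (A : Matrix (Fin m) (Fin m) ℝ) : Continuous (wnorm A) := by
  unfold wnorm
  exact eucNorm_continuous.comp (by
    apply continuous_pi
    intro i
    simp only [Matrix.mulVec, dotProduct]
    exact continuous_finset_sum _ fun j _ => (continuous_const.mul (continuous_apply j)))

lemma sqrt_exp_neg' (s : ℝ) : Real.sqrt (Real.exp (-s)) = Real.exp (-(s/2)) := by
  rw [show Real.exp (-s) = (Real.exp (-(s/2)))^2 by rw [sq, ← Real.exp_add]; congr 1; ring]
  exact Real.sqrt_sq (Real.exp_nonneg _)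

lemma inv_sqrt_diff_sq {δ z w : ℝ} (hδ : 0 < δ) (hz : δ ≤ z) (hw : δ ≤ w) :
    (Real.sqrt z⁻¹ - Real.sqrt w⁻¹)^2 ≤ (z - w)^2 / (4 * δ^3) := by
  rw [Real.sqrt_inv, Real.sqrt_inv]
  set sz := Real.sqrt z with hszdef
  set sw := Real.sqrt w with hswdef
  have hz0 : (0:ℝ) < z := lt_of_lt_of_le hδ hz
  have hw0 : (0:ℝ) < w := lt_of_lt_of_le hδ hw
  have hsz2 : sz^2 = z := Real.sq_sqrt hz0.le
  have hsw2 : sw^2 = w := Real.sq_sqrt hw0.le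
  have hszpos : 0 < sz := Real.sqrt_pos.2 hz0
  have hswpos : 0 < sw := Real.sqrt_pos.2 hw0
  have hsd : Real.sqrt δ ≤ sz := Real.sqrt_le_sqrt hz
  have hsd' : Real.sqrt δ ≤ sw := Real.sqrt_le_sqrt hw
  have hsdpos : 0 < Real.sqrt δ := Real.sqrt_pos.2 hδ
  have hsd2 : (Real.sqrt δ)^2 = δ := Real.sq_sqrt hδ.le
  have hdiff : sz⁻¹ - sw⁻¹ = (sw - sz) / (sz * sw) := by field_simp
  rw [hdiff, div_pow]
  have hprod : (sz * sw)^2 = z * w := by rw [mul_pow, hsz2, hsw2]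
  rw [hprod, div_le_div_iff₀ (by positivity) (by positivity)]
  have key1 : (sw - sz)^2 * (sw + sz)^2 = (w - z)^2 := by nlinarith [hsz2, hsw2]
  have h4δ : 4 * δ ≤ (sw + sz)^2 := by nlinarith
  have key2 : (sw - sz)^2 * (4 * δ) ≤ (w - z)^2 := by nlinarith [sq_nonneg (sw - sz)]
  have hzw : δ^2 ≤ z * w := by nlinarith
  nlinarith [sq_nonneg (w - z), sq_nonneg (sw - sz), mul_nonneg (sq_nonneg (sw-sz)) hδ.le,
    mul_le_mul_of_nonneg_right key2 (sq_nonneg δ),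
    mul_le_mul_of_nonneg_left hzw (sq_nonneg (w - z))]

lemma exp_neg_sub_le' {s t : ℝ} (hs : 0 ≤ s) (ht : 0 ≤ t) :
    |Real.exp (-s) - Real.exp (-t)| ≤ |s - t| := by
  wlog h : s ≤ t generalizing s t
  · rw [abs_sub_comm, abs_sub_comm s t]; exact this ht hs (le_of_not_ge h)
  have h1 : Real.exp (-t) ≤ Real.exp (-s) := Real.exp_le_exp.2 (by linarith)
  rw [abs_of_nonneg (by linarith), abs_of_nonpos (by linarith : s - t ≤ 0)]
  have h3 : Real.exp (-s) ≤ 1 := Real.exp_le_one_iff.2 (by linarith)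
  have h4 : 1 - Real.exp (s - t) ≤ t - s := by
    have := Real.add_one_le_exp (s - t); linarith
  have h5 : 0 ≤ 1 - Real.exp (s - t) := by
    have : Real.exp (s - t) ≤ 1 := Real.exp_le_one_iff.2 (by linarith)
    linarith
  have h2 : Real.exp (-s) - Real.exp (-t) = Real.exp (-s) * (1 - Real.exp (s - t)) := by
    rw [mul_sub, ← Real.exp_add]; ring_nf
  nlinarith [Real.exp_pos (-s)]

lemma abstract_sq {A1 A2 E1 E2 δ b c : ℝ} (hδ : 0 < δ)
    (hE2a : 0 ≤ E2) (hE2b : E2 ≤ 1)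
    (hA1le : A1^2 ≤ δ⁻¹) (hEsq : (E1-E2)^2 ≤ (1/4)*b^2)
    (hA : (A1-A2)^2 ≤ c^2/(4*δ^3)) :
    (A1*E1 - A2*E2)^2 ≤ δ⁻¹/2*b^2 + c^2/(2*δ^3) := by
  have hx : A1^2 * (E1-E2)^2 ≤ δ⁻¹ * ((1/4) * b^2) :=
    mul_le_mul hA1le hEsq (sq_nonneg _) (by positivity)
  have hy : (A1-A2)^2 * E2^2 ≤ (c^2 / (4 * δ^3)) * 1 :=
    mul_le_mul hA (by nlinarith : E2^2 ≤ 1) (sq_nonneg _) (by positivity)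
  have expand : A1*E1 - A2*E2 = A1*(E1-E2) + (A1-A2)*E2 := by ring
  rw [expand]
  have hXY : (A1*(E1-E2)+(A1-A2)*E2)^2 ≤ 2*(A1^2*(E1-E2)^2) + 2*((A1-A2)^2*E2^2) := by
    nlinarith [sq_nonneg (A1*(E1-E2) - (A1-A2)*E2)]
  calc (A1*(E1-E2)+(A1-A2)*E2)^2
      ≤ 2*(A1^2*(E1-E2)^2) + 2*((A1-A2)^2*E2^2) := hXY
    _ ≤ 2*(δ⁻¹*((1/4)*b^2)) + 2*((c^2/(4*δ^3))*1) := by linarith [hx, hy]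
    _ = δ⁻¹/2 * b^2 + c^2/(2*δ^3) := by ring

lemma pointwise_sq {δ z w s t b c : ℝ} (hδ : 0 < δ) (hz : δ ≤ z) (hw : δ ≤ w)
    (hs : 0 ≤ s) (ht : 0 ≤ t) (hst : |s - t| ≤ b) (hzw : |z - w| ≤ c) :
    (Real.sqrt z⁻¹ * Real.exp (-(s/2)) - Real.sqrt w⁻¹ * Real.exp (-(t/2)))^2
      ≤ δ⁻¹/2 * b^2 + c^2/(2*δ^3) := by
  have hb : 0 ≤ b := le_trans (abs_nonneg _) hst
  have hc : 0 ≤ c := le_trans (abs_nonneg _) hzw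
  have hz0 : (0:ℝ) < z := lt_of_lt_of_le hδ hz
  apply abstract_sq hδ (Real.exp_nonneg _) (Real.exp_le_one_iff.2 (by linarith))
  · rw [Real.sq_sqrt (by positivity : (0:ℝ) ≤ z⁻¹)]
    exact inv_anti₀ hδ hz
  · have h0 := exp_neg_sub_le' (by linarith : (0:ℝ) ≤ s/2) (by linarith : (0:ℝ) ≤ t/2)
    have h1 : |Real.exp (-(s/2)) - Real.exp (-(t/2))| ≤ (1/2) * b := by
      calc |Real.exp (-(s/2)) - Real.exp (-(t/2))| ≤ |s/2 - t/2| := h0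
        _ = |s - t| / 2 := by rw [show s/2 - t/2 = (s-t)/2 by ring, abs_div]; norm_num
        _ ≤ (1/2) * b := by linarith
    calc (Real.exp (-(s/2)) - Real.exp (-(t/2)))^2
        = |Real.exp (-(s/2)) - Real.exp (-(t/2))|^2 := (sq_abs _).symm
      _ ≤ ((1/2)*b)^2 := pow_le_pow_left₀ (abs_nonneg _) h1 2
      _ = (1/4)*b^2 := by ring
  · calc (Real.sqrt z⁻¹ - Real.sqrt w⁻¹)^2 ≤ (z - w)^2 / (4 * δ^3) :=
        inv_sqrt_diff_sq hδ hz hw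
      _ ≤ c^2 / (4 * δ^3) := by
          have h1 : (z - w)^2 ≤ c^2 := by
            calc (z - w)^2 = |z - w|^2 := (sq_abs _).symm
              _ ≤ c^2 := pow_le_pow_left₀ (abs_nonneg _) hzw 2
          gcongr

end helpers

set_option maxHeartbeats 1000000 in
theorem stmt2
    {X : Type*} [NormedAddCommGroup X] [NormedSpace ℝ X] [CompleteSpace X]
    [MeasurableSpace X] [BorelSpace X]
    (μ0 : Measure X) [IsProbabilityMeasure μ0]
    -- μ0 is a mean-zero Gaussian measure with μ0(X) = 1:
    (hFernique : ∃ a : ℝ, 0 < a ∧ Integrable (fun u => Real.exp (a * ‖u‖ ^ 2)) μ0)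
    (hball : ∀ r : ℝ, 0 < r → 0 < μ0 {u : X | ‖u‖ ≤ r})
    {m : ℕ} (Γ Γih : Matrix (Fin m) (Fin m) ℝ)
    (hΓ : Γ.PosDef) (hΓih : Γih * Γih = Γ⁻¹)
    (y : Fin m → ℝ)
    (G : X → (Fin m → ℝ)) (GN : ℕ → X → (Fin m → ℝ))
    (hGmeas : Measurable G) (hGNmeas : ∀ N, Measurable (GN N))
    -- exponential bounds on G and G^N, uniform in N
    (hG : ∀ ε : ℝ, 0 < ε → ∃ M : ℝ, ∀ (N : ℕ) (u : X),
      wnorm Γih (G u) ≤ Real.exp (ε * ‖u‖ ^ 2 + M) ∧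
      wnorm Γih (GN N u) ≤ Real.exp (ε * ‖u‖ ^ 2 + M))
    (ψ : ℕ → ℝ) (hψ : Tendsto ψ atTop (𝓝 0))
    -- forward approximation estimate
    (happrox : ∀ ε : ℝ, 0 < ε → ∃ K' : ℝ, 0 < K' ∧ ∀ (N : ℕ) (u : X),
      eucNorm (G u - GN N u) ≤ K' * Real.exp (ε * ‖u‖ ^ 2) * ψ N)
    (Φ : X → ℝ) (ΦN : ℕ → X → ℝ)
    (hΦ : ∀ u, Φ u = (1 / 2) * (wnorm Γih (y - G u)) ^ 2)
    (hΦN : ∀ N u, ΦN N u = (1 / 2) * (wnorm Γih (y - GN N u)) ^ 2) :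
    ∃ C : ℝ, ∀ N : ℕ,
      hellinger μ0
        (fun u => (∫ u', Real.exp (-(Φ u')) ∂μ0)⁻¹ * Real.exp (-(Φ u)))
        (fun u => (∫ u', Real.exp (-(ΦN N u')) ∂μ0)⁻¹ * Real.exp (-(ΦN N u)))
        ≤ C * ψ N := by
  classical
  obtain ⟨a, ha, haI⟩ := hFernique
  obtain ⟨M, hM⟩ := hG (a/8) (by positivity)
  obtain ⟨K', hK'pos, hK'⟩ := happrox (a/8) (by positivity)
  have hψ0 : ∀ N, 0 ≤ ψ N := by
    intro N
    have h1 := hK' N 0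
    have h2 := eucNorm_nonneg (G 0 - GN N 0)
    have h3 : 0 < K' * Real.exp (a/8 * ‖(0:X)‖^2) :=
      mul_pos hK'pos (Real.exp_pos _)
    nlinarith [h3]
  set F := Real.sqrt (∑ i, ∑ j, Γih i j ^ 2) with hFdef
  have hF : 0 ≤ F := Real.sqrt_nonneg _
  set C₁ := F * K' * (wnorm Γih y + Real.exp M) with hC₁def
  have hwy : 0 ≤ wnorm Γih y := wnorm_nonneg' _ _
  have hC₁ : 0 ≤ C₁ := by
    apply mul_nonneg (mul_nonneg hF hK'pos.le)
    positivity
  set B : X → ℝ := fun u => C₁ * Real.exp (a/4 * ‖u‖^2) with hBdef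
  have hB0 : ∀ u, 0 ≤ B u := fun u => mul_nonneg hC₁ (Real.exp_nonneg _)
  have hBcont : Continuous B := by
    apply continuous_const.mul
    exact Real.continuous_exp.comp (continuous_const.mul (continuous_norm.pow 2))
  -- key pointwise estimate on |Φ - ΦN|
  have key : ∀ N u, |Φ u - ΦN N u| ≤ B u * ψ N := by
    intro N u
    set s := wnorm Γih (y - G u) with hsdef
    set t := wnorm Γih (y - GN N u) with htdef
    have hs : 0 ≤ s := wnorm_nonneg' _ _
    have ht : 0 ≤ t := wnorm_nonneg' _ _
    have hGb := (hM N u).1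
    have hGNb := (hM N u).2
    have hdiffb : wnorm Γih (G u - GN N u) ≤ F * (K' * Real.exp (a/8 * ‖u‖^2) * ψ N) := by
      calc wnorm Γih (G u - GN N u) ≤ F * eucNorm (G u - GN N u) := wnorm_lip _ _
        _ ≤ F * (K' * Real.exp (a/8 * ‖u‖^2) * ψ N) :=
            mul_le_mul_of_nonneg_left (hK' N u) hF
    have hst : |s - t| ≤ F * (K' * Real.exp (a/8 * ‖u‖^2) * ψ N) := by
      rw [abs_sub_le_iff]
      constructor
      · calc s - t ≤ wnorm Γih ((y - G u) - (y - GN N u)) := wnorm_sub_wnorm _ _ _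
          _ = wnorm Γih (G u - GN N u) := by
              rw [show (y - G u) - (y - GN N u) = -(G u - GN N u) by abel, wnorm_neg]
          _ ≤ _ := hdiffb
      · calc t - s ≤ wnorm Γih ((y - GN N u) - (y - G u)) := wnorm_sub_wnorm _ _ _
          _ = wnorm Γih (G u - GN N u) := by
              rw [show (y - GN N u) - (y - G u) = G u - GN N u by abel]
          _ ≤ _ := hdiffb
    have hexp1 : (1:ℝ) ≤ Real.exp (a/8 * ‖u‖^2) := Real.one_le_exp (by positivity)
    have hsplit : Real.exp (a/8 * ‖u‖^2 + M)
        = Real.exp (a/8 * ‖u‖^2) * Real.exp M := Real.exp_add _ _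
    have h1 : s ≤ wnorm Γih y + wnorm Γih (G u) := by
      rw [hsdef]; exact wnorm_sub_le _ _ _
    have h2 : t ≤ wnorm Γih y + wnorm Γih (GN N u) := by
      rw [htdef]; exact wnorm_sub_le _ _ _
    have hsum : s + t ≤ 2 * (wnorm Γih y + Real.exp M) * Real.exp (a/8 * ‖u‖^2) := by
      nlinarith [Real.exp_pos M]
    have heq : Φ u - ΦN N u = (1/2) * ((s - t) * (s + t)) := by
      rw [hΦ u, hΦN N u]; ring
    rw [heq, abs_mul, abs_mul,
      abs_of_nonneg (show (0:ℝ) ≤ 1/2 by norm_num),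
      abs_of_nonneg (by linarith : (0:ℝ) ≤ s + t)]
    have habs : 0 ≤ |s - t| := abs_nonneg _
    have hprod : |s - t| * (s + t)
        ≤ (F * (K' * Real.exp (a/8 * ‖u‖^2) * ψ N))
          * (2 * (wnorm Γih y + Real.exp M) * Real.exp (a/8 * ‖u‖^2)) :=
      mul_le_mul hst hsum (by linarith)
        (mul_nonneg hF (mul_nonneg (mul_nonneg hK'pos.le (Real.exp_nonneg _)) (hψ0 N)))
    have hee : Real.exp (a/8 * ‖u‖^2) * Real.exp (a/8 * ‖u‖^2)
        = Real.exp (a/4 * ‖u‖^2) := by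
      rw [← Real.exp_add]; congr 1; ring
    have hrw : (F * (K' * Real.exp (a/8 * ‖u‖^2) * ψ N))
          * (2 * (wnorm Γih y + Real.exp M) * Real.exp (a/8 * ‖u‖^2))
        = 2 * (B u * ψ N) := by
      rw [hBdef]
      calc (F * (K' * Real.exp (a/8 * ‖u‖^2) * ψ N))
            * (2 * (wnorm Γih y + Real.exp M) * Real.exp (a/8 * ‖u‖^2))
          = 2 * ((F * K' * (wnorm Γih y + Real.exp M))
              * (Real.exp (a/8 * ‖u‖^2) * Real.exp (a/8 * ‖u‖^2)) * ψ N) := by ring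
        _ = 2 * ((F * K' * (wnorm Γih y + Real.exp M))
              * Real.exp (a/4 * ‖u‖^2) * ψ N) := by rw [hee]
        _ = 2 * (C₁ * Real.exp (a/4 * ‖u‖^2) * ψ N) := by rw [hC₁def]
    linarith [hprod, hrw ▸ hprod]
  -- nonnegativity and measurability of potentials
  have hΦ0 : ∀ u, 0 ≤ Φ u := fun u => by rw [hΦ]; positivity
  have hΦN0 : ∀ N u, 0 ≤ ΦN N u := fun N u => by rw [hΦN]; positivity
  have hΦmeas : Measurable Φ := by
    rw [funext hΦ]
    exact measurable_const.mul
      ((((wnorm_continuous Γih).measurable).comp (measurable_const.sub hGmeas)).pow_const 2)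
  have hΦNmeas : ∀ N, Measurable (ΦN N) := by
    intro N
    rw [funext (hΦN N)]
    exact measurable_const.mul
      ((((wnorm_continuous Γih).measurable).comp
        (measurable_const.sub (hGNmeas N))).pow_const 2)
  -- integrability of exp(-f) for nonneg measurable f
  have hexpint : ∀ (f : X → ℝ), Measurable f → (∀ u, 0 ≤ f u) →
      Integrable (fun u => Real.exp (-(f u))) μ0 := by
    intro f hf h0
    apply (integrable_const (1:ℝ)).mono'
      (Real.measurable_exp.comp hf.neg).aestronglyMeasurable
    refine ae_of_all _ fun u => ?_
    show ‖Real.exp (-(f u))‖ ≤ 1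
    rw [Real.norm_eq_abs, abs_of_nonneg (Real.exp_nonneg _)]
    exact Real.exp_le_one_iff.2 (by linarith [h0 u])
  set Z : ℝ := ∫ u', Real.exp (-(Φ u')) ∂μ0 with hZdef
  set ZN : ℕ → ℝ := fun N => ∫ u', Real.exp (-(ΦN N u')) ∂μ0 with hZNdef
  -- lower bound δ for the normalisation constants
  set b : ℝ := (1/2) * (wnorm Γih y + Real.exp (a/8 + M))^2 with hbdef
  set S : Set X := {u : X | ‖u‖ ≤ 1} with hSdef
  have hSmeas : MeasurableSet S := (isClosed_le continuous_norm continuous_const).measurableSet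
  set δ : ℝ := Real.exp (-b) * (μ0 S).toReal with hδdef
  have hμS : 0 < (μ0 S).toReal :=
    ENNReal.toReal_pos (hball 1 one_pos).ne' (measure_ne_top _ _)
  have hδpos : 0 < δ := mul_pos (Real.exp_pos _) hμS
  have hlow : ∀ (f : X → ℝ), Measurable f → (∀ u, 0 ≤ f u) → (∀ u, ‖u‖ ≤ 1 → f u ≤ b) →
      δ ≤ ∫ u, Real.exp (-(f u)) ∂μ0 := by
    intro f hf h0 hub
    have hint := hexpint f hf h0
    have h1 : ∫ u, S.indicator (fun _ => Real.exp (-b)) u ∂μ0 = δ := by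
      rw [integral_indicator_const _ hSmeas, smul_eq_mul, hδdef]; exact mul_comm _ _
    rw [← h1]
    apply integral_mono_of_nonneg
      (ae_of_all _ fun u => Set.indicator_nonneg (fun _ _ => Real.exp_nonneg _) u) hint
    refine ae_of_all _ fun u => ?_
    show S.indicator (fun _ => Real.exp (-b)) u ≤ Real.exp (-(f u))
    by_cases hu : u ∈ S
    · rw [Set.indicator_of_mem hu]
      exact Real.exp_le_exp.2 (by have := hub u hu; linarith)
    · rw [Set.indicator_of_notMem hu]
      exact Real.exp_nonneg _
  have hnorm_sq_le : ∀ u : X, ‖u‖ ≤ 1 → ‖u‖^2 ≤ 1 := by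
    intro u hu; nlinarith [norm_nonneg u]
  have hub_aux : ∀ (v : Fin m → ℝ) (u : X), ‖u‖ ≤ 1 →
      wnorm Γih v ≤ Real.exp (a/8 * ‖u‖^2 + M) →
      (1/2) * (wnorm Γih (y - v))^2 ≤ b := by
    intro v u hu hv
    have h1 : wnorm Γih (y - v) ≤ wnorm Γih y + wnorm Γih v := wnorm_sub_le _ _ _
    have h2 : Real.exp (a/8 * ‖u‖^2 + M) ≤ Real.exp (a/8 + M) := by
      apply Real.exp_le_exp.2
      have := hnorm_sq_le u hu
      nlinarith
    have h3 : wnorm Γih (y - v) ≤ wnorm Γih y + Real.exp (a/8 + M) := by linarith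
    have h4 : 0 ≤ wnorm Γih (y - v) := wnorm_nonneg' _ _
    rw [hbdef]
    nlinarith [Real.exp_pos (a/8 + M)]
  have hZlow : δ ≤ Z := by
    rw [hZdef]
    apply hlow Φ hΦmeas hΦ0
    intro u hu
    rw [hΦ u]
    exact hub_aux (G u) u hu (hM 0 u).1
  have hZNlow : ∀ N, δ ≤ ZN N := by
    intro N
    rw [hZNdef]
    apply hlow (ΦN N) (hΦNmeas N) (hΦN0 N)
    intro u hu
    rw [hΦN N u]
    exact hub_aux (GN N u) u hu (hM N u).2
  -- integrability of B and B^2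
  have hBexp : ∀ u : X, a/4 * ‖u‖^2 ≤ a * ‖u‖^2 := by
    intro u; nlinarith [sq_nonneg ‖u‖]
  have intB : Integrable B μ0 := by
    apply (haI.const_mul C₁).mono' hBcont.measurable.aestronglyMeasurable
    refine ae_of_all _ fun u => ?_
    rw [Real.norm_eq_abs, abs_of_nonneg (hB0 u), hBdef]
    exact mul_le_mul_of_nonneg_left (Real.exp_le_exp.2 (hBexp u)) hC₁
  have intB2 : Integrable (fun u => (B u)^2) μ0 := by
    apply (haI.const_mul (C₁^2)).mono' ((hBcont.pow 2).measurable.aestronglyMeasurable)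
    refine ae_of_all _ fun u => ?_
    rw [Real.norm_eq_abs, abs_of_nonneg (sq_nonneg _), hBdef]
    have he2 : (Real.exp (a/4 * ‖u‖^2))^2 = Real.exp (a/2 * ‖u‖^2) := by
      rw [sq, ← Real.exp_add]; congr 1; ring
    calc (C₁ * Real.exp (a/4 * ‖u‖^2))^2 = C₁^2 * Real.exp (a/2 * ‖u‖^2) := by
          rw [mul_pow, he2]
      _ ≤ C₁^2 * Real.exp (a * ‖u‖^2) := by
          apply mul_le_mul_of_nonneg_left (Real.exp_le_exp.2 ?_) (sq_nonneg _)
          nlinarith [sq_nonneg ‖u‖]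
  set IB : ℝ := ∫ u, B u ∂μ0 with hIBdef
  set IB2 : ℝ := ∫ u, (B u)^2 ∂μ0 with hIB2def
  have hIB0 : 0 ≤ IB := integral_nonneg hB0
  have hIB20 : 0 ≤ IB2 := integral_nonneg fun u => sq_nonneg _
  -- |Z - ZN| estimate
  have hZdiff : ∀ N, |Z - ZN N| ≤ IB * ψ N := by
    intro N
    have hint1 := hexpint Φ hΦmeas hΦ0
    have hint2 := hexpint (ΦN N) (hΦNmeas N) (hΦN0 N)
    have h1 : Z - ZN N = ∫ u, (Real.exp (-(Φ u)) - Real.exp (-(ΦN N u))) ∂μ0 :=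
      (integral_sub hint1 hint2).symm
    rw [h1]
    calc |∫ u, (Real.exp (-(Φ u)) - Real.exp (-(ΦN N u))) ∂μ0|
        = ‖∫ u, (Real.exp (-(Φ u)) - Real.exp (-(ΦN N u))) ∂μ0‖ := (Real.norm_eq_abs _).symm
      _ ≤ ∫ u, ‖Real.exp (-(Φ u)) - Real.exp (-(ΦN N u))‖ ∂μ0 :=
          norm_integral_le_integral_norm _
      _ ≤ ∫ u, B u * ψ N ∂μ0 := by
          apply integral_mono_of_nonneg (ae_of_all _ fun u => norm_nonneg _)
            (intB.mul_const (ψ N))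
          refine ae_of_all _ fun u => ?_
          show ‖Real.exp (-(Φ u)) - Real.exp (-(ΦN N u))‖ ≤ B u * ψ N
          rw [Real.norm_eq_abs]
          calc |Real.exp (-(Φ u)) - Real.exp (-(ΦN N u))| ≤ |Φ u - ΦN N u| :=
              exp_neg_sub_le' (hΦ0 u) (hΦN0 N u)
            _ ≤ B u * ψ N := key N u
      _ = IB * ψ N := by rw [integral_mul_const]
  -- final constant
  set K : ℝ := δ⁻¹/2 * IB2 + IB^2/(2*δ^3) with hKdef
  have hK0 : 0 ≤ K := by
    rw [hKdef]
    have h1 : 0 ≤ δ⁻¹/2 * IB2 := mul_nonneg (by positivity) hIB20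
    have h2 : (0:ℝ) ≤ IB^2/(2*δ^3) := by positivity
    linarith
  refine ⟨Real.sqrt (K/2), fun N => ?_⟩
  -- pointwise bound on the integrand
  have hZpos : 0 < Z := lt_of_lt_of_le hδpos hZlow
  have hZNpos : 0 < ZN N := lt_of_lt_of_le hδpos (hZNlow N)
  have hpoint : ∀ u,
      (Real.sqrt (Z⁻¹ * Real.exp (-(Φ u))) - Real.sqrt ((ZN N)⁻¹ * Real.exp (-(ΦN N u))))^2
      ≤ (δ⁻¹/2 * ψ N^2) * (B u)^2 + IB^2/(2*δ^3) * ψ N^2 := by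
    intro u
    rw [Real.sqrt_mul (by positivity : (0:ℝ) ≤ Z⁻¹),
      Real.sqrt_mul (by positivity : (0:ℝ) ≤ (ZN N)⁻¹), sqrt_exp_neg', sqrt_exp_neg']
    calc (Real.sqrt Z⁻¹ * Real.exp (-(Φ u/2)) - Real.sqrt (ZN N)⁻¹ * Real.exp (-(ΦN N u/2)))^2
        ≤ δ⁻¹/2 * (B u * ψ N)^2 + (IB * ψ N)^2/(2*δ^3) :=
          pointwise_sq hδpos hZlow (hZNlow N) (hΦ0 u) (hΦN0 N u) (key N u) (hZdiff N)
      _ = (δ⁻¹/2 * ψ N^2) * (B u)^2 + IB^2/(2*δ^3) * ψ N^2 := by ring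
  -- integrate
  have hgint : Integrable
      (fun u => (δ⁻¹/2 * ψ N^2) * (B u)^2 + IB^2/(2*δ^3) * ψ N^2) μ0 :=
    (intB2.const_mul _).add (integrable_const _)
  have hI : ∫ u, (Real.sqrt (Z⁻¹ * Real.exp (-(Φ u)))
        - Real.sqrt ((ZN N)⁻¹ * Real.exp (-(ΦN N u))))^2 ∂μ0
      ≤ K * ψ N^2 := by
    calc ∫ u, (Real.sqrt (Z⁻¹ * Real.exp (-(Φ u)))
          - Real.sqrt ((ZN N)⁻¹ * Real.exp (-(ΦN N u))))^2 ∂μ0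
        ≤ ∫ u, ((δ⁻¹/2 * ψ N^2) * (B u)^2 + IB^2/(2*δ^3) * ψ N^2) ∂μ0 :=
          integral_mono_of_nonneg (ae_of_all _ fun u => sq_nonneg _) hgint
            (ae_of_all _ hpoint)
      _ = (δ⁻¹/2 * ψ N^2) * IB2 + IB^2/(2*δ^3) * ψ N^2 := by
          rw [integral_add (intB2.const_mul _) (integrable_const _),
            integral_const_mul, integral_const]
          simp [hIB2def]
      _ = K * ψ N^2 := by rw [hKdef]; ring
  -- conclude
  show Real.sqrt ((1/2) * ∫ u, (Real.sqrt (Z⁻¹ * Real.exp (-(Φ u)))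
      - Real.sqrt ((ZN N)⁻¹ * Real.exp (-(ΦN N u))))^2 ∂μ0) ≤ Real.sqrt (K/2) * ψ N
  calc Real.sqrt ((1/2) * ∫ u, (Real.sqrt (Z⁻¹ * Real.exp (-(Φ u)))
        - Real.sqrt ((ZN N)⁻¹ * Real.exp (-(ΦN N u))))^2 ∂μ0)
      ≤ Real.sqrt ((1/2) * (K * ψ N^2)) := Real.sqrt_le_sqrt (by linarith)
    _ = Real.sqrt (K/2) * ψ N := by
        rw [show (1/2) * (K * ψ N^2) = (K/2) * ψ N^2 by ring,
          Real.sqrt_mul (by positivity : (0:ℝ) ≤ K/2), Real.sqrt_sq (hψ0 N)]
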